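/- Let C, K be nontrivial cones in a real normed space X. Then 0 ∉ cl(S_C − S_K⁰) if and only if [0 ∉ cl(S_{bd C} − S_{bd K}⁰) and K ∩ C = {0}], where for a set D, S_D := conv(D ∩ S_X) and S_D⁰ := conv({0} ∪ (D ∩ S_X)). -/

import Mathlib

open Set Pointwise

def IsCone {X : Type*} [NormedAddCommGroup X] [NormedSpace ℝ X] (C : Set X) : Prop :=
  0 ∈ C ∧ ∀ t : ℝ, 0 ≤ t → ∀ x ∈ C, t • x ∈ C

set_option linter.unusedSectionVars false

section helpers

variable {X : Type*} [NormedAddCommGroup X] [NormedSpace ℝ X]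

lemma cone_frontier_smul {C : Set X} (hC : IsCone C) {t : ℝ} (ht : 0 < t) {x : X}
    (hx : x ∈ frontier C) : t • x ∈ frontier C := by
  have hsmul : t • C = C := by
    apply subset_antisymm
    · rintro _ ⟨y, hy, rfl⟩; exact hC.2 t ht.le y hy
    · intro y hy
      exact ⟨t⁻¹ • y, hC.2 t⁻¹ (by positivity) y hy, by
        simp [smul_smul, mul_inv_cancel₀ ht.ne']⟩
  constructor
  · have : t • x ∈ t • closure C := smul_mem_smul_set hx.1
    rwa [← closure_smul₀' ht.ne', hsmul] at this
  · intro hint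
    have : t • x ∈ t • interior C := by rwa [← interior_smul₀ ht.ne', hsmul]
    exact hx.2 ((smul_mem_smul_set_iff₀ ht.ne' _ _).mp this)

lemma clop_lemma {α : Type*} [TopologicalSpace α] {U s : Set α} (hU : IsPreconnected U)
    (h : U ∩ frontier s = ∅) : U ⊆ interior s ∨ U ∩ closure s = ∅ := by
  have hsub : U ⊆ interior s ∪ (closure s)ᶜ := by
    intro x hxU
    by_cases hx : x ∈ closure s
    · by_cases hx2 : x ∈ interior s
      · exact Or.inl hx2
      · exact absurd (by exact ⟨hxU, hx, hx2⟩ : x ∈ U ∩ frontier s) (by rw [h]; exact notMem_empty x)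
    · exact Or.inr hx
  have hdisj : Disjoint (interior s) (closure s)ᶜ :=
    disjoint_compl_right.mono_left (interior_subset_closure)
  rcases hU.subset_or_subset isOpen_interior isClosed_closure.isOpen_compl hdisj hsub with h1 | h2
  · exact Or.inl h1
  · right
    rw [eq_empty_iff_forall_notMem]
    rintro x ⟨hxU, hxc⟩
    exact (h2 hxU) hxc


lemma conn_lemma (g : X →L[ℝ] ℝ) {r : ℝ} (hr : |r| < ‖g‖) :
    IsPreconnected {x : X | g x < r * ‖x‖} := by
  -- find a "south pole" z
  obtain ⟨z, hz⟩ : ∃ z : X, g z < -(|r| * ‖z‖) := by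
    by_contra h
    push_neg at h
    refine absurd hr (not_lt.2 (ContinuousLinearMap.opNorm_le_bound g (abs_nonneg r) fun x => ?_))
    have h1 := h x
    have h2 := h (-x)
    rw [map_neg, norm_neg] at h2
    rw [Real.norm_eq_abs, abs_le]
    constructor <;> linarith
  set U : Set X := {x : X | g x < r * ‖x‖} with hU
  have hrabs : -(|r|) ≤ r := neg_abs_le r
  have hzU : ∀ c : ℝ, 0 < c → c • z ∈ U := by
    intro c hc
    simp only [hU, mem_setOf_eq, map_smul, smul_eq_mul, norm_smul, Real.norm_eq_abs,
      abs_of_pos hc]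
    have h1 : c * g z < c * (-(|r| * ‖z‖)) := (mul_lt_mul_iff_right₀ hc).2 hz
    nlinarith [mul_le_mul_of_nonneg_right (neg_abs_le r) (mul_nonneg hc.le (norm_nonneg z))]
  have key : ∀ x ∈ U, ∀ t : ℝ, 0 ≤ t → x + t • z ∈ U := by
    intro x hx t ht
    simp only [hU, mem_setOf_eq] at hx ⊢
    have e1 : g (x + t • z) = g x + t * g z := by simp [map_add, map_smul]
    have e2 : t * g z ≤ t * (-(|r| * ‖z‖)) := mul_le_mul_of_nonneg_left hz.le ht
    have hn1 : ‖x‖ - t * ‖z‖ ≤ ‖x + t • z‖ := by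
      have := norm_add_le (x + t • z) (-(t • z))
      simp only [add_neg_cancel_right, norm_neg, norm_smul, Real.norm_eq_abs,
        abs_of_nonneg ht] at this
      linarith
    have hn2 : ‖x + t • z‖ ≤ ‖x‖ + t * ‖z‖ := by
      have := norm_add_le x (t • z)
      rwa [norm_smul, Real.norm_eq_abs, abs_of_nonneg ht] at this
    rcases le_or_gt 0 r with hr0 | hr0
    · have : r * (‖x‖ - t * ‖z‖) ≤ r * ‖x + t • z‖ := mul_le_mul_of_nonneg_left hn1 hr0
      rw [abs_of_nonneg hr0] at e2
      nlinarith
    · have : r * (‖x‖ + t * ‖z‖) ≤ r * ‖x + t • z‖ := by nlinarith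
      rw [abs_of_neg hr0] at e2
      nlinarith
  -- the big-T lemma
  have key2 : ∀ x ∈ U, ∃ T : ℝ, 0 < T ∧ ∀ s : ℝ, 0 ≤ s → s ≤ 1 →
      s • x + T • z ∈ U := by
    intro x hx
    have hε : 0 < -(g z + |r| * ‖z‖) := by linarith
    set T : ℝ := (|r| * ‖x‖ + |g x| + 1) / (-(g z + |r| * ‖z‖)) with hT
    have hTpos : 0 < T := by
      apply div_pos _ hε
      positivity
    refine ⟨T, hTpos, fun s hs0 hs1 => ?_⟩
    simp only [hU, mem_setOf_eq]
    have e1 : g (s • x + T • z) = s * g x + T * g z := by simp [map_add, map_smul]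
    have e3 : T * (-(g z + |r| * ‖z‖)) = |r| * ‖x‖ + |g x| + 1 := div_mul_cancel₀ _ hε.ne'
    have hb1 : s * g x ≤ |g x| := by
      rcases le_or_gt 0 (g x) with h | h
      · calc s * g x ≤ 1 * g x := mul_le_mul_of_nonneg_right hs1 h
          _ = g x := one_mul _
          _ ≤ |g x| := le_abs_self _
      · have : s * g x ≤ 0 := mul_nonpos_of_nonneg_of_nonpos hs0 h.le
        linarith [abs_nonneg (g x)]
    have hn : ‖s • x + T • z‖ ≤ ‖x‖ + T * ‖z‖ := by
      have h1 := norm_add_le (s • x) (T • z)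
      have h2 : ‖s • x‖ ≤ ‖x‖ := by
        rw [norm_smul, Real.norm_eq_abs, abs_of_nonneg hs0]
        nlinarith [norm_nonneg x]
      have h3 : ‖T • z‖ = T * ‖z‖ := by
        rw [norm_smul, Real.norm_eq_abs, abs_of_pos hTpos]
      linarith
    have hfin : s * g x + T * g z < -(|r| * ‖s • x + T • z‖) := by
      nlinarith [mul_le_mul_of_nonneg_left hn (abs_nonneg r)]
    have : -(|r| * ‖s • x + T • z‖) ≤ r * ‖s • x + T • z‖ := by
      nlinarith [norm_nonneg (s • x + T • z)]
    linarith [e1 ▸ hfin]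
  -- build paths
  have hzU1 : z ∈ U := by
    have := hzU 1 one_pos
    rwa [one_smul] at this
  apply isPreconnected_of_forall z
  intro x hxU
  obtain ⟨T, hTpos, hT⟩ := key2 x hxU
  refine ⟨segment ℝ x (x + T • z) ∪ segment ℝ (x + T • z) (T • z) ∪ segment ℝ (T • z) z,
    ?_, ?_, ?_, ?_⟩
  · -- subset of U
    rintro y ((hy | hy) | hy)
    · obtain ⟨a, b, ha, hb, hab, rfl⟩ := hy
      have : a • x + b • (x + T • z) = x + (b * T) • z := by
        rw [smul_add, ← add_assoc, ← add_smul, hab, one_smul, smul_smul]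
      rw [this]
      exact key x hxU (b * T) (by positivity)
    · obtain ⟨a, b, ha, hb, hab, rfl⟩ := hy
      have : a • (x + T • z) + b • (T • z) = a • x + T • z := by
        rw [smul_add, add_assoc, smul_smul, smul_smul, ← add_smul]
        congr 2
        nlinarith
      rw [this]
      exact hT a ha (by linarith)
    · obtain ⟨a, b, ha, hb, hab, rfl⟩ := hy
      have he : a • (T • z) + b • z = (a * T + b) • z := by
        rw [smul_smul, ← add_smul]
      rw [he]
      apply hzU
      rcases eq_or_lt_of_le hb with h | h
      · have : a = 1 := by linarith
        nlinarith
      · nlinarith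
  · exact Or.inr (right_mem_segment ℝ _ _)
  · exact Or.inl (Or.inl (left_mem_segment ℝ _ _))
  · -- preconnected
    apply IsPreconnected.union (T • z)
    · exact Or.inr (right_mem_segment ℝ _ _)
    · exact left_mem_segment ℝ _ _
    · apply IsPreconnected.union (x + T • z)
      · exact right_mem_segment ℝ _ _
      · exact left_mem_segment ℝ _ _
      · exact (convex_segment _ _).isPreconnected
      · exact (convex_segment _ _).isPreconnected
    · exact (convex_segment _ _).isPreconnected

lemma unit_mem_sphere {x : X} (hx : x ≠ 0) : ‖x‖⁻¹ • x ∈ Metric.sphere (0:X) 1 := by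
  rw [mem_sphere_zero_iff_norm, norm_smul, Real.norm_eq_abs, abs_inv, abs_norm]
  field_simp

lemma closure_inter_sphere {C : Set X} (hC : IsCone C) :
    closure C ∩ Metric.sphere (0:X) 1 ⊆ closure (C ∩ Metric.sphere (0:X) 1) := by
  rintro x ⟨hxc, hxs⟩
  rw [mem_sphere_zero_iff_norm] at hxs
  rw [Metric.mem_closure_iff]
  intro ε hε
  rw [Metric.mem_closure_iff] at hxc
  obtain ⟨c, hcC, hcd⟩ := hxc (min (ε / 2) (1 / 2)) (by positivity)
  have hd : dist x c < ε / 2 := lt_of_lt_of_le hcd (min_le_left _ _)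
  have hd2 : dist x c < 1 / 2 := lt_of_lt_of_le hcd (min_le_right _ _)
  rw [dist_eq_norm] at hd hd2
  have hnc : 1 / 2 < ‖c‖ := by
    have := norm_sub_norm_le x c
    rw [hxs] at this
    linarith
  have hc0 : c ≠ 0 := by
    intro h
    rw [h, norm_zero] at hnc
    linarith
  refine ⟨‖c‖⁻¹ • c, ⟨hC.2 _ (by positivity) c hcC, unit_mem_sphere hc0⟩, ?_⟩
  have h1 : dist c (‖c‖⁻¹ • c) = |1 - ‖c‖| := by
    rw [dist_eq_norm]
    have he : c - ‖c‖⁻¹ • c = (1 - ‖c‖⁻¹) • c := by rw [sub_smul, one_smul]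
    rw [he, norm_smul, Real.norm_eq_abs]
    have hcpos : (0:ℝ) < ‖c‖ := by linarith
    calc |1 - ‖c‖⁻¹| * ‖c‖ = |(1 - ‖c‖⁻¹) * ‖c‖| := by rw [abs_mul, abs_of_pos hcpos]
      _ = |‖c‖ - 1| := by rw [sub_mul, one_mul, inv_mul_cancel₀ hcpos.ne']
      _ = |1 - ‖c‖| := abs_sub_comm _ _
  have h2 : |1 - ‖c‖| ≤ ‖x - c‖ := by
    have := norm_sub_norm_le x c
    have := norm_sub_norm_le c x
    rw [hxs] at *
    rcases abs_cases (1 - ‖c‖) with ⟨h, _⟩ | ⟨h, _⟩ <;> rw [h]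
    · linarith
    · rw [← norm_neg (x - c)]
      simp only [neg_sub]
      linarith
  calc dist x (‖c‖⁻¹ • c) ≤ dist x c + dist c (‖c‖⁻¹ • c) := dist_triangle _ _ _
    _ < ε := by rw [dist_eq_norm, h1]; linarith

lemma sub_mem_closure_sub {A B : Set X} {a b : X} (ha : a ∈ closure A) (hb : b ∈ closure B) :
    a - b ∈ closure (A - B) := by
  rw [Metric.mem_closure_iff] at *
  intro ε hε
  obtain ⟨a', ha', hda⟩ := ha (ε / 2) (by positivity)
  obtain ⟨b', hb', hdb⟩ := hb (ε / 2) (by positivity)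
  refine ⟨a' - b', Set.sub_mem_sub ha' hb', ?_⟩
  rw [dist_eq_norm] at *
  have : a - b - (a' - b') = (a - a') - (b - b') := by abel
  rw [this]
  calc ‖a - a' - (b - b')‖ ≤ ‖a - a'‖ + ‖b - b'‖ := norm_sub_le _ _
    _ < ε := by linarith

lemma frontier_sphere_nonempty (hrank : 1 < Module.rank ℝ X) {C : Set X} (hC : IsCone C)
    (h1 : C ≠ {0}) (h2 : C ≠ Set.univ) :
    (frontier C ∩ Metric.sphere (0:X) 1).Nonempty := by
  by_contra h
  rw [not_nonempty_iff_eq_empty] at h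
  have hfr : frontier C ⊆ {0} := by
    intro x hx
    by_contra hx0
    rw [mem_singleton_iff] at hx0
    have h1 : ‖x‖⁻¹ • x ∈ frontier C :=
      cone_frontier_smul hC (inv_pos.mpr (norm_pos_iff.mpr hx0)) hx
    have : ‖x‖⁻¹ • x ∈ frontier C ∩ Metric.sphere (0:X) 1 := ⟨h1, unit_mem_sphere hx0⟩
    rw [h] at this
    exact notMem_empty _ this
  have hconn : IsPreconnected ({(0:X)}ᶜ) :=
    (isConnected_compl_singleton_of_one_lt_rank hrank 0).isPreconnected
  have hfr2 : {(0:X)}ᶜ ∩ frontier C = ∅ := by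
    rw [eq_empty_iff_forall_notMem]
    rintro x ⟨hx1, hx2⟩
    exact hx1 (hfr hx2)
  rcases clop_lemma hconn hfr2 with h3 | h3
  · apply h2
    apply Set.eq_univ_of_forall
    intro x
    by_cases hx : x = 0
    · rw [hx]; exact hC.1
    · exact interior_subset (h3 hx)
  · apply h1
    apply subset_antisymm
    · intro x hx
      by_contra hx0
      rw [mem_singleton_iff] at hx0
      have : x ∈ {(0:X)}ᶜ ∩ closure C := ⟨hx0, subset_closure hx⟩
      rw [h3] at this
      exact notMem_empty _ this
    · intro x hx
      rw [mem_singleton_iff] at hx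
      rw [hx]; exact hC.1

lemma lowdim_case (hrank : Module.rank ℝ X ≤ 1) {C K : Set X} (hC : IsCone C) (hK : IsCone K)
    (hCnt : C ≠ {0} ∧ C ≠ Set.univ) (hKnt : K ≠ {0} ∧ K ≠ Set.univ) (h2 : K ∩ C = {0}) :
    (0 : X) ∉ closure (convexHull ℝ (C ∩ Metric.sphere (0:X) 1) -
        convexHull ℝ ({0} ∪ (K ∩ Metric.sphere (0:X) 1))) := by
  obtain ⟨v₀, hv₀⟩ := rank_le_one_iff.mp hrank
  -- classify a nontrivial cone as a ray
  have classify : ∀ D : Set X, IsCone D → D ≠ {0} → D ≠ Set.univ →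
      ∃ w : X, ‖w‖ = 1 ∧ w ∈ D ∧ D = {x | ∃ a : ℝ, 0 ≤ a ∧ x = a • w} := by
    intro D hD hD1 hD2
    have : ∃ c ∈ D, c ≠ 0 := by
      by_contra hcon
      push_neg at hcon
      apply hD1
      apply subset_antisymm
      · intro x hx; rw [mem_singleton_iff]; exact hcon x hx
      · intro x hx; rw [mem_singleton_iff] at hx; rw [hx]; exact hD.1
    obtain ⟨c, hcD, hc0⟩ := this
    set w := ‖c‖⁻¹ • c with hw
    have hwD : w ∈ D := hD.2 _ (by positivity) c hcD
    have hw1 : ‖w‖ = 1 := by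
      have := unit_mem_sphere hc0
      rwa [mem_sphere_zero_iff_norm] at this
    have hw0 : w ≠ 0 := by intro hcon; rw [hcon, norm_zero] at hw1; norm_num at hw1
    have hall : ∀ x : X, ∃ a : ℝ, x = a • w := by
      intro x
      obtain ⟨r, hr⟩ := hv₀ x
      obtain ⟨t, ht⟩ := hv₀ w
      have ht0 : t ≠ 0 := by
        intro hcon; rw [hcon, zero_smul] at ht; exact hw0 ht.symm
      exact ⟨r / t, by rw [← hr, ← ht, smul_smul, div_mul_cancel₀ _ ht0]⟩
    refine ⟨w, hw1, hwD, ?_⟩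
    have hnoneg : ∀ d ∈ D, ∀ b : ℝ, d = b • w → 0 ≤ b := by
      intro d hd b hdb
      by_contra hb
      push_neg at hb
      apply hD2
      apply Set.eq_univ_of_forall
      intro x
      obtain ⟨a, ha⟩ := hall x
      rcases le_or_gt 0 a with h | h
      · rw [ha]; exact hD.2 a h w hwD
      · have : x = (a / b) • d := by
          rw [hdb, smul_smul, div_mul_cancel₀ _ hb.ne, ha]
        rw [this]
        exact hD.2 _ (div_pos_of_neg_of_neg h hb).le d hd
    apply subset_antisymm
    · intro d hd
      obtain ⟨a, ha⟩ := hall d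
      exact ⟨a, hnoneg d hd a ha, ha⟩
    · rintro x ⟨a, ha, rfl⟩
      exact hD.2 a ha w hwD
  obtain ⟨uu, hu1, huC, hCeq⟩ := classify C hC hCnt.1 hCnt.2
  obtain ⟨vv, hv1, hvK, hKeq⟩ := classify K hK hKnt.1 hKnt.2
  have hu0 : uu ≠ 0 := by intro hcon; rw [hcon, norm_zero] at hu1; norm_num at hu1
  obtain ⟨g, hgn, hgu⟩ := exists_dual_vector ℝ uu (norm_ne_zero_iff.mpr hu0)
  rw [hu1] at hgu
  norm_num at hgu
  -- v = b • u with b = ±1, and b = 1 contradicts h2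
  obtain ⟨b, hb⟩ : ∃ b : ℝ, vv = b • uu := by
    obtain ⟨r, hr⟩ := hv₀ vv
    obtain ⟨t, ht⟩ := hv₀ uu
    have ht0 : t ≠ 0 := by
      intro hcon; rw [hcon, zero_smul] at ht; exact hu0 ht.symm
    exact ⟨r / t, by rw [← hr, ← ht, smul_smul, div_mul_cancel₀ _ ht0]⟩
  have hbabs : |b| = 1 := by
    have : ‖vv‖ = |b| * ‖uu‖ := by rw [hb, norm_smul, Real.norm_eq_abs]
    rw [hv1, hu1, mul_one] at this
    exact this.symm
  have hbneg : b = -1 := by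
    rcases abs_eq (by norm_num : (0:ℝ) ≤ 1) |>.mp hbabs with h | h
    · exfalso
      have huK : uu ∈ K := by rw [hKeq]; exact ⟨1, by norm_num, by rw [h, one_smul] at hb; rw [hb, one_smul]⟩
      have : uu ∈ K ∩ C := ⟨huK, huC⟩
      rw [h2, mem_singleton_iff] at this
      exact hu0 this
    · exact h
  have hvneg : vv = -uu := by rw [hb, hbneg, neg_one_smul]
  -- compute C ∩ S = {u}
  have hCS : C ∩ Metric.sphere (0:X) 1 = {uu} := by
    apply subset_antisymm
    · rintro x ⟨hxC, hxS⟩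
      rw [hCeq] at hxC
      obtain ⟨a, ha0, rfl⟩ := hxC
      rw [mem_sphere_zero_iff_norm, norm_smul, Real.norm_eq_abs, hu1, mul_one,
        abs_of_nonneg ha0] at hxS
      rw [mem_singleton_iff, hxS, one_smul]
    · intro x hx
      rw [mem_singleton_iff] at hx
      rw [hx]
      exact ⟨huC, by rw [mem_sphere_zero_iff_norm]; exact hu1⟩
  have hKS : K ∩ Metric.sphere (0:X) 1 = {vv} := by
    apply subset_antisymm
    · rintro x ⟨hxK, hxS⟩
      rw [hKeq] at hxK
      obtain ⟨a, ha0, rfl⟩ := hxK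
      rw [mem_sphere_zero_iff_norm, norm_smul, Real.norm_eq_abs, hv1, mul_one,
        abs_of_nonneg ha0] at hxS
      rw [mem_singleton_iff, hxS, one_smul]
    · intro x hx
      rw [mem_singleton_iff] at hx
      rw [hx]
      exact ⟨hvK, by rw [mem_sphere_zero_iff_norm]; exact hv1⟩
  rw [hCS, hKS, convexHull_singleton]
  have hunion : ({(0:X)} : Set X) ∪ {vv} = ({(0:X), vv} : Set X) := by rw [Set.singleton_union]
  rw [hunion, convexHull_pair]
  -- the difference is within {x | 1 ≤ g x}
  have hsub : {uu} - segment ℝ 0 vv ⊆ {x : X | 1 ≤ g x} := by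
    rintro _ ⟨a, ha, w, hw, rfl⟩
    rw [mem_singleton_iff] at ha
    subst ha
    have hwle : g w ≤ 0 := by
      have hconv : Convex ℝ {x : X | g x ≤ 0} := by
        intro p hp q hq a b ha hb hab
        simp only [mem_setOf_eq, map_add, map_smul, smul_eq_mul] at *
        nlinarith
      have := hconv.segment_subset (by simp : g (0:X) ≤ 0)
        (by simp [hvneg, hgu] : g vv ≤ 0) hw
      exact this
    simp only [mem_setOf_eq, map_sub, hgu]
    linarith
  intro hmem
  have hcl : closure ({uu} - segment ℝ 0 vv) ⊆ {x : X | 1 ≤ g x} :=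
    closure_minimal hsub (isClosed_le continuous_const g.continuous)
  have := hcl hmem
  simp only [mem_setOf_eq, map_zero] at this
  linarith

lemma highdim_case (hrank : 1 < Module.rank ℝ X) {C K : Set X} (hC : IsCone C) (hK : IsCone K)
    (hCnt : C ≠ {0} ∧ C ≠ Set.univ) (hKnt : K ≠ {0} ∧ K ≠ Set.univ)
    (h1 : (0 : X) ∉ closure (convexHull ℝ (frontier C ∩ Metric.sphere (0:X) 1) -
          convexHull ℝ ({0} ∪ (frontier K ∩ Metric.sphere (0:X) 1))))
    (h2 : K ∩ C = {0}) :
    (0 : X) ∉ closure (convexHull ℝ (C ∩ Metric.sphere (0:X) 1) -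
        convexHull ℝ ({0} ∪ (K ∩ Metric.sphere (0:X) 1))) := by
  obtain ⟨a₀, ha₀⟩ := frontier_sphere_nonempty hrank hC hCnt.1 hCnt.2
  obtain ⟨b₀, hb₀⟩ := frontier_sphere_nonempty hrank hK hKnt.1 hKnt.2
  have ha₀n : ‖a₀‖ = 1 := by
    have h := ha₀.2; rwa [mem_sphere_zero_iff_norm] at h
  have hb₀n : ‖b₀‖ = 1 := by
    have h := hb₀.2; rwa [mem_sphere_zero_iff_norm] at h
  -- separation
  have hconv : Convex ℝ (closure (convexHull ℝ (frontier C ∩ Metric.sphere (0:X) 1) -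
      convexHull ℝ ({0} ∪ (frontier K ∩ Metric.sphere (0:X) 1)))) :=
    ((convex_convexHull ℝ _).sub (convex_convexHull ℝ _)).closure
  obtain ⟨f, u, hfu, hu0⟩ := geometric_hahn_banach_closed_point hconv isClosed_closure h1
  rw [map_zero] at hu0
  set g : X →L[ℝ] ℝ := -f with hg
  set α : ℝ := -u with hα
  have hαpos : 0 < α := by rw [hα]; linarith
  have hsep : ∀ a ∈ frontier C ∩ Metric.sphere (0:X) 1,
      ∀ b ∈ ({0} : Set X) ∪ (frontier K ∩ Metric.sphere (0:X) 1), g b + α ≤ g a := by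
    intro a ha b hb
    have haS : a ∈ convexHull ℝ (frontier C ∩ Metric.sphere (0:X) 1) := subset_convexHull ℝ _ ha
    have hbS : b ∈ convexHull ℝ ({0} ∪ (frontier K ∩ Metric.sphere (0:X) 1)) :=
      subset_convexHull ℝ _ hb
    have h := hfu (a - b) (subset_closure (Set.sub_mem_sub haS hbS))
    rw [map_sub] at h
    simp only [hg, ContinuousLinearMap.neg_apply, hα]
    linarith
  clear_value α
  clear_value g
  have habs : ∀ x : X, ‖x‖ = 1 → |g x| ≤ ‖g‖ := by
    intro x hx
    calc |g x| = ‖g x‖ := (Real.norm_eq_abs _).symm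
      _ ≤ ‖g‖ * ‖x‖ := g.le_opNorm x
      _ = ‖g‖ := by rw [hx, mul_one]
  have hmemK0 : ∀ x ∈ ({0} : Set X) ∪ (frontier K ∩ Metric.sphere (0:X) 1), |g x| ≤ ‖g‖ := by
    rintro x (hx | hx)
    · rw [mem_singleton_iff] at hx
      rw [hx, map_zero, abs_zero]
      exact norm_nonneg g
    · refine habs x ?_
      have h := hx.2
      rwa [mem_sphere_zero_iff_norm] at h
  have hbddC : BddBelow (g '' (frontier C ∩ Metric.sphere (0:X) 1)) := by
    refine ⟨-‖g‖, ?_⟩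
    rintro _ ⟨x, hx, rfl⟩
    have hx1 : ‖x‖ = 1 := by
      have h := hx.2
      rwa [mem_sphere_zero_iff_norm] at h
    have := habs x hx1
    rw [abs_le] at this
    exact this.1
  have hbddK : BddAbove (g '' (({0} : Set X) ∪ (frontier K ∩ Metric.sphere (0:X) 1))) := by
    refine ⟨‖g‖, ?_⟩
    rintro _ ⟨x, hx, rfl⟩
    have := hmemK0 x hx
    rw [abs_le] at this
    exact this.2
  set N : ℝ := ‖g‖ with hN
  set m : ℝ := sInf (g '' (frontier C ∩ Metric.sphere (0:X) 1)) with hm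
  set s : ℝ := sSup (g '' (({0} : Set X) ∪ (frontier K ∩ Metric.sphere (0:X) 1))) with hs
  have hinf_le : ∀ a ∈ frontier C ∩ Metric.sphere (0:X) 1, m ≤ g a :=
    fun a ha => csInf_le hbddC ⟨a, ha, rfl⟩
  have hsup_ge : ∀ b ∈ ({0} : Set X) ∪ (frontier K ∩ Metric.sphere (0:X) 1), g b ≤ s :=
    fun b hb => le_csSup hbddK ⟨b, hb, rfl⟩
  have hs0 : 0 ≤ s := by
    have h := hsup_ge 0 (Or.inl rfl)
    rwa [map_zero] at h
  have hmsα : s + α ≤ m := by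
    apply le_csInf ⟨_, Set.mem_image_of_mem g ha₀⟩
    rintro _ ⟨a, ha, rfl⟩
    have : s ≤ g a - α := by
      apply csSup_le ⟨_, Set.mem_image_of_mem g (Or.inl rfl)⟩
      rintro _ ⟨b, hb, rfl⟩
      linarith [hsep a ha b hb]
    linarith
  have hmN : m ≤ N := by
    have h1 := hinf_le a₀ ha₀
    have h2 := habs a₀ ha₀n
    rw [abs_le] at h2
    rw [hN]
    linarith [h2.2]
  clear_value N m s
  have hNpos : 0 < N := by linarith
  set r₁ : ℝ := m - α / 4 with hr₁
  set r₂ : ℝ := s + α / 4 with hr₂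
  clear_value r₁ r₂
  have hr₁abs : |r₁| < N := by
    rw [abs_lt]
    constructor <;> linarith
  have hr₂abs : |r₂| < N := by
    rw [abs_lt]
    constructor <;> linarith
  -- the two connected cones
  have hUconn : IsPreconnected {x : X | g x < r₁ * ‖x‖} := by
    apply conn_lemma g
    rw [← hN]
    exact hr₁abs
  have hWconn : IsPreconnected {x : X | (-g) x < (-r₂) * ‖x‖} := by
    apply conn_lemma (-g)
    rw [norm_neg, abs_neg, ← hN]
    exact hr₂abs
  -- frontiers avoid the cones
  have hUfr : {x : X | g x < r₁ * ‖x‖} ∩ frontier C = ∅ := by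
    rw [eq_empty_iff_forall_notMem]
    rintro x ⟨hxU, hxf⟩
    rw [mem_setOf_eq] at hxU
    have hx0 : x ≠ 0 := by
      rintro rfl
      rw [map_zero, norm_zero, mul_zero] at hxU
      exact lt_irrefl 0 hxU
    have hnormpos : 0 < ‖x‖ := norm_pos_iff.mpr hx0
    have hxhat : ‖x‖⁻¹ • x ∈ frontier C ∩ Metric.sphere (0:X) 1 :=
      ⟨cone_frontier_smul hC (inv_pos.mpr hnormpos) hxf, unit_mem_sphere hx0⟩
    have h1 := hinf_le _ hxhat
    rw [map_smul, smul_eq_mul] at h1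
    have h3 : ‖x‖ * m ≤ g x := by
      have h4 := mul_le_mul_of_nonneg_left h1 hnormpos.le
      rwa [← mul_assoc, mul_inv_cancel₀ hnormpos.ne', one_mul] at h4
    linarith [mul_pos (show (0:ℝ) < m - r₁ by linarith) hnormpos, hxU, h3]
  have hWfr : {x : X | (-g) x < (-r₂) * ‖x‖} ∩ frontier K = ∅ := by
    rw [eq_empty_iff_forall_notMem]
    rintro x ⟨hxW, hxf⟩
    rw [mem_setOf_eq, ContinuousLinearMap.neg_apply, neg_mul, neg_lt_neg_iff] at hxW
    have hx0 : x ≠ 0 := by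
      rintro rfl
      rw [map_zero, norm_zero, mul_zero] at hxW
      exact lt_irrefl 0 hxW
    have hnormpos : 0 < ‖x‖ := norm_pos_iff.mpr hx0
    have hxhat : ‖x‖⁻¹ • x ∈ ({0} : Set X) ∪ (frontier K ∩ Metric.sphere (0:X) 1) :=
      Or.inr ⟨cone_frontier_smul hK (inv_pos.mpr hnormpos) hxf, unit_mem_sphere hx0⟩
    have h1 := hsup_ge _ hxhat
    rw [map_smul, smul_eq_mul] at h1
    have h3 : g x ≤ ‖x‖ * s := by
      have h4 := mul_le_mul_of_nonneg_left h1 hnormpos.le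
      rwa [← mul_assoc, mul_inv_cancel₀ hnormpos.ne', one_mul] at h4
    linarith [mul_pos (show (0:ℝ) < r₂ - s by linarith) hnormpos, hxW, h3]
  -- clopen arguments
  have hCge : ∀ x ∈ C, r₁ * ‖x‖ ≤ g x := by
    rcases clop_lemma hUconn hUfr with hint | hcl
    · exfalso
      have hb₀U : b₀ ∈ {x : X | g x < r₁ * ‖x‖} := by
        rw [mem_setOf_eq, hb₀n, mul_one]
        have h := hsup_ge b₀ (Or.inr hb₀)
        linarith
      have hb₀int : b₀ ∈ interior C := hint hb₀U
      have hb₀cl : b₀ ∈ closure K := frontier_subset_closure hb₀.1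
      rw [mem_closure_iff] at hb₀cl
      obtain ⟨y, ⟨hyint, hyball⟩, hyK⟩ := hb₀cl (interior C ∩ Metric.ball b₀ 1)
        (isOpen_interior.inter Metric.isOpen_ball) ⟨hb₀int, Metric.mem_ball_self one_pos⟩
      have hy0 : y ≠ 0 := by
        rintro rfl
        rw [Metric.mem_ball, dist_zero_left, hb₀n] at hyball
        exact lt_irrefl 1 hyball
      have hmem : y ∈ K ∩ C := ⟨hyK, interior_subset hyint⟩
      rw [h2, mem_singleton_iff] at hmem
      exact hy0 hmem
    · intro x hx
      by_contra hcon
      push_neg at hcon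
      have hmem : x ∈ {x : X | g x < r₁ * ‖x‖} ∩ closure C := ⟨hcon, subset_closure hx⟩
      rw [hcl] at hmem
      exact notMem_empty _ hmem
  have hKle : ∀ x ∈ K, g x ≤ r₂ * ‖x‖ := by
    rcases clop_lemma hWconn hWfr with hint | hcl
    · exfalso
      have ha₀W : a₀ ∈ {x : X | (-g) x < (-r₂) * ‖x‖} := by
        rw [mem_setOf_eq, ContinuousLinearMap.neg_apply, neg_mul, neg_lt_neg_iff, ha₀n, mul_one]
        have h := hinf_le a₀ ha₀
        linarith
      have ha₀int : a₀ ∈ interior K := hint ha₀W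
      have ha₀cl : a₀ ∈ closure C := frontier_subset_closure ha₀.1
      rw [mem_closure_iff] at ha₀cl
      obtain ⟨y, ⟨hyint, hyball⟩, hyC⟩ := ha₀cl (interior K ∩ Metric.ball a₀ 1)
        (isOpen_interior.inter Metric.isOpen_ball) ⟨ha₀int, Metric.mem_ball_self one_pos⟩
      have hy0 : y ≠ 0 := by
        rintro rfl
        rw [Metric.mem_ball, dist_zero_left, ha₀n] at hyball
        exact lt_irrefl 1 hyball
      have hmem : y ∈ K ∩ C := ⟨interior_subset hyint, hyC⟩
      rw [h2, mem_singleton_iff] at hmem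
      exact hy0 hmem
    · intro x hx
      by_contra hcon
      push_neg at hcon
      have hxW : x ∈ {x : X | (-g) x < (-r₂) * ‖x‖} := by
        rw [mem_setOf_eq, ContinuousLinearMap.neg_apply, neg_mul, neg_lt_neg_iff]
        exact hcon
      have hmem : x ∈ {x : X | (-g) x < (-r₂) * ‖x‖} ∩ closure K := ⟨hxW, subset_closure hx⟩
      rw [hcl] at hmem
      exact notMem_empty _ hmem
  -- conclude
  have hglin : IsLinearMap ℝ (fun x : X => g x) := ⟨map_add g, map_smul g⟩
  have hhalfC : Convex ℝ {x : X | r₁ ≤ g x} := convex_halfSpace_ge hglin r₁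
  have hhalfK : Convex ℝ {x : X | g x ≤ r₂} := convex_halfSpace_le hglin r₂
  have hSC : convexHull ℝ (C ∩ Metric.sphere (0:X) 1) ⊆ {x : X | r₁ ≤ g x} := by
    apply convexHull_min _ hhalfC
    rintro x ⟨hxC, hxS⟩
    have hxn : ‖x‖ = 1 := by rwa [mem_sphere_zero_iff_norm] at hxS
    have h := hCge x hxC
    rw [hxn, mul_one] at h
    exact h
  have hSK : convexHull ℝ (({0} : Set X) ∪ (K ∩ Metric.sphere (0:X) 1)) ⊆
      {x : X | g x ≤ r₂} := by
    apply convexHull_min _ hhalfK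
    rintro x (hx | ⟨hxK, hxS⟩)
    · rw [mem_singleton_iff] at hx
      rw [hx, mem_setOf_eq, map_zero]
      linarith
    · have hxn : ‖x‖ = 1 := by rwa [mem_sphere_zero_iff_norm] at hxS
      have h := hKle x hxK
      rw [hxn, mul_one] at h
      exact h
  intro hmem
  have hsub : convexHull ℝ (C ∩ Metric.sphere (0:X) 1) -
      convexHull ℝ (({0} : Set X) ∪ (K ∩ Metric.sphere (0:X) 1)) ⊆
      {x : X | r₁ - r₂ ≤ g x} := by
    rintro _ ⟨a, ha, b, hb, rfl⟩
    have hga := hSC ha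
    have hgb := hSK hb
    rw [mem_setOf_eq] at *
    rw [map_sub]
    linarith
  have hclosed : IsClosed {x : X | r₁ - r₂ ≤ g x} :=
    isClosed_le continuous_const g.continuous
  have hfin := closure_minimal hsub hclosed hmem
  rw [mem_setOf_eq, map_zero] at hfin
  linarith

end helpers

theorem nonsym_separation_via_boundaries
    {X : Type*} [NormedAddCommGroup X] [NormedSpace ℝ X]
    (C K : Set X) (hC : IsCone C) (hK : IsCone K)
    (hCnt : C ≠ {0} ∧ C ≠ Set.univ) (hKnt : K ≠ {0} ∧ K ≠ Set.univ) :
    (0 : X) ∉ closure (convexHull ℝ (C ∩ Metric.sphere (0:X) 1) -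
        convexHull ℝ ({0} ∪ (K ∩ Metric.sphere (0:X) 1))) ↔
      ((0 : X) ∉ closure (convexHull ℝ (frontier C ∩ Metric.sphere (0:X) 1) -
          convexHull ℝ ({0} ∪ (frontier K ∩ Metric.sphere (0:X) 1))) ∧
        K ∩ C = {0}) := by
  constructor
  · intro h
    constructor
    · -- boundary separation from full separation
      have hsubC : convexHull ℝ (frontier C ∩ Metric.sphere (0:X) 1) ⊆
          closure (convexHull ℝ (C ∩ Metric.sphere (0:X) 1)) := by
        apply convexHull_min _ (convex_convexHull ℝ _).closure
        intro x hx
        have hx1 : x ∈ closure C ∩ Metric.sphere (0:X) 1 :=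
          ⟨frontier_subset_closure hx.1, hx.2⟩
        exact closure_mono (subset_convexHull ℝ _) (closure_inter_sphere hC hx1)
      have hsubK : convexHull ℝ ({0} ∪ (frontier K ∩ Metric.sphere (0:X) 1)) ⊆
          closure (convexHull ℝ ({0} ∪ (K ∩ Metric.sphere (0:X) 1))) := by
        apply convexHull_min _ (convex_convexHull ℝ _).closure
        rintro x (hx | hx)
        · exact subset_closure (subset_convexHull ℝ _ (Or.inl hx))
        · have hx1 : x ∈ closure (K ∩ Metric.sphere (0:X) 1) :=
            closure_inter_sphere hK ⟨frontier_subset_closure hx.1, hx.2⟩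
          refine closure_mono ?_ hx1
          exact fun y hy => subset_convexHull ℝ _ (Or.inr hy)
      intro h0
      apply h
      have hcl : closure (convexHull ℝ (frontier C ∩ Metric.sphere (0:X) 1) -
          convexHull ℝ ({0} ∪ (frontier K ∩ Metric.sphere (0:X) 1))) ⊆
          closure (convexHull ℝ (C ∩ Metric.sphere (0:X) 1) -
            convexHull ℝ ({0} ∪ (K ∩ Metric.sphere (0:X) 1))) := by
        apply closure_minimal _ isClosed_closure
        rintro _ ⟨a, ha, b, hb, rfl⟩
        exact sub_mem_closure_sub (hsubC ha) (hsubK hb)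
      exact hcl h0
    · -- the cones intersect trivially
      apply subset_antisymm
      · rintro x ⟨hxK, hxC⟩
        rw [mem_singleton_iff]
        by_contra hx0
        apply h
        apply subset_closure
        have hpos : (0:ℝ) < ‖x‖⁻¹ := inv_pos.mpr (norm_pos_iff.mpr hx0)
        have h1 : ‖x‖⁻¹ • x ∈ convexHull ℝ (C ∩ Metric.sphere (0:X) 1) :=
          subset_convexHull ℝ _ ⟨hC.2 _ hpos.le x hxC, unit_mem_sphere hx0⟩
        have h2 : ‖x‖⁻¹ • x ∈ convexHull ℝ ({0} ∪ (K ∩ Metric.sphere (0:X) 1)) :=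
          subset_convexHull ℝ _ (Or.inr ⟨hK.2 _ hpos.le x hxK, unit_mem_sphere hx0⟩)
        have h3 := Set.sub_mem_sub h1 h2
        rwa [sub_self] at h3
      · intro x hx
        rw [mem_singleton_iff] at hx
        rw [hx]
        exact ⟨hK.1, hC.1⟩
  · rintro ⟨h1, h2⟩
    by_cases hrank : 1 < Module.rank ℝ X
    · exact highdim_case hrank hC hK hCnt hKnt h1 h2
    · exact lowdim_case (not_lt.mp hrank) hC hK hCnt hKnt h2
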